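/- Let m, n ∈ ℕ, p ∈ [1, ∞], A a real m×n matrix, b, b̃ ∈ ℝᵐ, λ > 0, β ≥ 0, σ > 0, τ ≥ 0, and v, xᵏ ∈ ℝⁿ. Then the function x ↦ ‖Ax − b‖_p + λ‖x‖₁ − λβ⟨v, x⟩ + (σ/2)‖x − xᵏ‖₂² + (τ/2)‖Ax − b̃‖₂² has exactly one global minimizer on ℝⁿ. -/

import Mathlib

open scoped ENNReal RealInnerProductSpace

noncomputable def lpNorm (p : ℝ≥0∞) [Fact (1 ≤ p)] {m : ℕ} (y : Fin m → ℝ) : ℝ :=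
  ‖(WithLp.equiv p (Fin m → ℝ)).symm y‖

noncomputable def l2Norm {m : ℕ} (y : Fin m → ℝ) : ℝ :=
  ‖(WithLp.equiv 2 (Fin m → ℝ)).symm y‖

noncomputable def l1Norm {n : ℕ} (x : Fin n → ℝ) : ℝ := ∑ i, |x i|

section aux

variable {E : Type*} [NormedAddCommGroup E] [NormedSpace ℝ E]

lemma key_identity {G : Type*} [NormedAddCommGroup G] [InnerProductSpace ℝ G]
    (X Y : G) (a b : ℝ) (hab : a + b = 1) :
    ‖a • X + b • Y‖ ^ 2 = a * ‖X‖ ^ 2 + b * ‖Y‖ ^ 2 - a * b * ‖X - Y‖ ^ 2 := by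
  have hb' : b = 1 - a := by linarith
  subst hb'
  simp only [← real_inner_self_eq_norm_sq, inner_add_left, inner_add_right,
    inner_sub_left, inner_sub_right, real_inner_smul_left, real_inner_smul_right,
    real_inner_comm Y X]
  ring

lemma affine_comb {G : Type*} [NormedAddCommGroup G] [NormedSpace ℝ G]
    (L : E →ₗ[ℝ] G) (w : G) (x y : E) (a b : ℝ) (hab : a + b = 1) :
    L (a • x + b • y) - w = a • (L x - w) + b • (L y - w) := by
  have h1 : a • (L x - w) + b • (L y - w) = a • L x + b • L y - (a + b) • w := by
    rw [smul_sub, smul_sub, add_smul]; abel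
  rw [map_add, map_smul, map_smul, h1, hab, one_smul]

lemma convexOn_norm_linear_sub {G : Type*} [NormedAddCommGroup G] [NormedSpace ℝ G]
    (L : E →ₗ[ℝ] G) (w : G) : ConvexOn ℝ Set.univ (fun x => ‖L x - w‖) := by
  refine ⟨convex_univ, fun x _ y _ a b ha hb hab => ?_⟩
  simp only [smul_eq_mul]
  rw [affine_comb L w x y a b hab]
  calc ‖a • (L x - w) + b • (L y - w)‖ ≤ ‖a • (L x - w)‖ + ‖b • (L y - w)‖ := norm_add_le _ _
    _ = a * ‖L x - w‖ + b * ‖L y - w‖ := by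
        rw [norm_smul, norm_smul, Real.norm_eq_abs, Real.norm_eq_abs,
          abs_of_nonneg ha, abs_of_nonneg hb]

lemma convexOn_const_mul_sq_norm_linear_sub {G : Type*} [NormedAddCommGroup G]
    [InnerProductSpace ℝ G] (c : ℝ) (hc : 0 ≤ c) (L : E →ₗ[ℝ] G) (w : G) :
    ConvexOn ℝ Set.univ (fun x => c * ‖L x - w‖ ^ 2) := by
  refine ⟨convex_univ, fun x _ y _ a b ha hb hab => ?_⟩
  simp only [smul_eq_mul]
  rw [affine_comb L w x y a b hab, key_identity _ _ a b hab]
  have hD : 0 ≤ a * b * ‖(L x - w) - (L y - w)‖ ^ 2 := by positivity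
  nlinarith [mul_nonneg hc hD]

lemma strictConvexOn_const_mul_sq_norm_sub {G : Type*} [NormedAddCommGroup G]
    [InnerProductSpace ℝ G] (c : ℝ) (hc : 0 < c) (w : G) :
    StrictConvexOn ℝ Set.univ (fun x => c * ‖x - w‖ ^ 2) := by
  refine ⟨convex_univ, fun x _ y _ hxy a b ha hb hab => ?_⟩
  simp only [smul_eq_mul]
  have h := affine_comb (LinearMap.id : G →ₗ[ℝ] G) w x y a b hab
  simp only [LinearMap.id_apply] at h
  rw [h, key_identity _ _ a b hab]
  have hD : (0:ℝ) < ‖(x - w) - (y - w)‖ ^ 2 := by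
    have hxy' : (x - w) - (y - w) ≠ 0 := by
      intro hz
      apply hxy
      have : x - y = 0 := by rw [← hz]; abel
      exact sub_eq_zero.mp this
    exact pow_pos (norm_pos_iff.mpr hxy') 2
  nlinarith [mul_pos hc (mul_pos (mul_pos ha hb) hD)]

lemma convexOn_l1 {n : ℕ} :
    ConvexOn ℝ Set.univ (fun x : EuclideanSpace ℝ (Fin n) => l1Norm x) := by
  refine ⟨convex_univ, fun x _ y _ a b ha hb hab => ?_⟩
  simp only [smul_eq_mul, l1Norm]
  calc ∑ i, |(a • x + b • y) i| ≤ ∑ i, (a * |x i| + b * |y i|) := by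
        refine Finset.sum_le_sum fun i _ => ?_
        have hi : (a • x + b • y) i = a * x i + b * y i := rfl
        rw [hi]
        calc |a * x i + b * y i| ≤ |a * x i| + |b * y i| := abs_add_le _ _
          _ = a * |x i| + b * |y i| := by
              rw [abs_mul, abs_mul, abs_of_nonneg ha, abs_of_nonneg hb]
    _ = a * ∑ i, |x i| + b * ∑ i, |y i| := by
        rw [Finset.sum_add_distrib, Finset.mul_sum, Finset.mul_sum]

end aux

/-- The strongly convex majorized subproblem has exactly one global minimizer. -/
theorem stmt_18 {m n : ℕ} (p : ℝ≥0∞) [Fact (1 ≤ p)]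
    (A : Matrix (Fin m) (Fin n) ℝ) (b btilde : Fin m → ℝ) (lam β σ τ : ℝ)
    (hlam : 0 < lam) (hβ : 0 ≤ β) (hσ : 0 < σ) (hτ : 0 ≤ τ)
    (v xk : EuclideanSpace ℝ (Fin n))
    (F : EuclideanSpace ℝ (Fin n) → ℝ)
    (hF : ∀ x, F x = lpNorm p (A.mulVec x - b) + lam * l1Norm x - lam * β * ⟪v, x⟫
      + σ / 2 * ‖x - xk‖ ^ 2 + τ / 2 * l2Norm (A.mulVec x - btilde) ^ 2) :
    ∃! xbar : EuclideanSpace ℝ (Fin n), ∀ x, F xbar ≤ F x := by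
  classical
  -- linear maps
  let M1 : EuclideanSpace ℝ (Fin n) →ₗ[ℝ] WithLp p (Fin m → ℝ) :=
    (WithLp.linearEquiv p ℝ (Fin m → ℝ)).symm.toLinearMap ∘ₗ A.mulVecLin ∘ₗ
      (WithLp.linearEquiv 2 ℝ (Fin n → ℝ)).toLinearMap
  let M2 : EuclideanSpace ℝ (Fin n) →ₗ[ℝ] EuclideanSpace ℝ (Fin m) :=
    (WithLp.linearEquiv 2 ℝ (Fin m → ℝ)).symm.toLinearMap ∘ₗ A.mulVecLin ∘ₗ
      (WithLp.linearEquiv 2 ℝ (Fin n → ℝ)).toLinearMap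
  let c1 : WithLp p (Fin m → ℝ) := (WithLp.equiv p (Fin m → ℝ)).symm b
  let c2 : EuclideanSpace ℝ (Fin m) := (WithLp.equiv 2 (Fin m → ℝ)).symm btilde
  have hF' : F = fun x : EuclideanSpace ℝ (Fin n) =>
      ‖M1 x - c1‖ + lam * l1Norm x - lam * β * ⟪v, x⟫
      + σ / 2 * ‖x - xk‖ ^ 2 + τ / 2 * ‖M2 x - c2‖ ^ 2 := by
    funext x; rw [hF]; rfl
  -- strict convexity
  have hconv1 : ConvexOn ℝ Set.univ (fun x : EuclideanSpace ℝ (Fin n) => ‖M1 x - c1‖) :=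
    convexOn_norm_linear_sub M1 c1
  have hconv2 : ConvexOn ℝ Set.univ (fun x : EuclideanSpace ℝ (Fin n) => lam * l1Norm x) :=
    convexOn_l1.smul hlam.le
  have hconc3 : ConcaveOn ℝ Set.univ (fun x : EuclideanSpace ℝ (Fin n) => lam * β * ⟪v, x⟫) := by
    refine ⟨convex_univ, fun x _ y _ a b ha hb hab => le_of_eq ?_⟩
    simp only [smul_eq_mul, inner_add_right, real_inner_smul_right]
    ring
  have hstrict4 : StrictConvexOn ℝ Set.univ
      (fun x : EuclideanSpace ℝ (Fin n) => σ / 2 * ‖x - xk‖ ^ 2) :=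
    strictConvexOn_const_mul_sq_norm_sub (σ / 2) (by positivity) xk
  have hconv5 : ConvexOn ℝ Set.univ
      (fun x : EuclideanSpace ℝ (Fin n) => τ / 2 * ‖M2 x - c2‖ ^ 2) :=
    convexOn_const_mul_sq_norm_linear_sub (τ / 2) (by positivity) M2 c2
  have hstrict : StrictConvexOn ℝ Set.univ F := by
    rw [hF']
    exact ((((hconv1.add hconv2).sub hconc3).add_strictConvexOn hstrict4).add_convexOn hconv5)
  -- continuity
  have hl1 : Continuous fun x : EuclideanSpace ℝ (Fin n) => l1Norm x := by
    simp only [l1Norm]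
    exact continuous_finset_sum _ fun i _ => ((continuous_apply i).comp (PiLp.continuous_ofLp 2 _)).abs
  have hcont : Continuous F := by
    rw [hF']
    have h1 : Continuous fun x : EuclideanSpace ℝ (Fin n) => M1 x :=
      M1.continuous_of_finiteDimensional
    have h2 : Continuous fun x : EuclideanSpace ℝ (Fin n) => M2 x :=
      M2.continuous_of_finiteDimensional
    exact (((((h1.sub continuous_const).norm).add (continuous_const.mul hl1)).sub
      (continuous_const.mul (continuous_const.inner continuous_id))).add
      (continuous_const.mul (((continuous_id.sub continuous_const).norm).pow 2))).add
      (continuous_const.mul (((h2.sub continuous_const).norm).pow 2))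
  -- coercivity
  have hlb : ∀ x : EuclideanSpace ℝ (Fin n),
      σ / 2 * (‖x‖ - ‖xk‖) ^ 2 - lam * β * ‖v‖ * ‖x‖ ≤ F x := by
    intro x
    rw [hF]
    have h1 : 0 ≤ lpNorm p (A.mulVec x - b) := norm_nonneg _
    have h2 : 0 ≤ l1Norm x := Finset.sum_nonneg fun i _ => abs_nonneg _
    have h3 : ⟪v, x⟫ ≤ ‖v‖ * ‖x‖ := real_inner_le_norm v x
    have h4 : (0:ℝ) ≤ τ / 2 * l2Norm (A.mulVec x - btilde) ^ 2 := by positivity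
    have h5 : (‖x‖ - ‖xk‖) ^ 2 ≤ ‖x - xk‖ ^ 2 := by
      rw [← sq_abs (‖x‖ - ‖xk‖)]
      exact pow_le_pow_left₀ (abs_nonneg _) (abs_norm_sub_norm_le x xk) 2
    have h6 := mul_le_mul_of_nonneg_left h3 (mul_nonneg hlam.le hβ)
    have h7 := mul_le_mul_of_nonneg_left h5 (by positivity : (0:ℝ) ≤ σ / 2)
    nlinarith [mul_nonneg hlam.le h2]
  have hg : Filter.Tendsto (fun t : ℝ => σ / 2 * (t - ‖xk‖) ^ 2 - lam * β * ‖v‖ * t)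
      Filter.atTop Filter.atTop := by
    have heq : (fun t : ℝ => σ / 2 * (t - ‖xk‖) ^ 2 - lam * β * ‖v‖ * t)
        = fun t : ℝ => t * (σ / 2 * t - (σ * ‖xk‖ + lam * β * ‖v‖)) + σ / 2 * ‖xk‖ ^ 2 := by
      funext t; ring
    rw [heq]
    apply Filter.tendsto_atTop_add_const_right
    refine Filter.Tendsto.atTop_mul_atTop₀ Filter.tendsto_id ?_
    apply Filter.tendsto_atTop_add_const_right
    exact Filter.Tendsto.const_mul_atTop (by positivity) Filter.tendsto_id
  have htend : Filter.Tendsto F (Filter.cocompact (EuclideanSpace ℝ (Fin n))) Filter.atTop :=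
    Filter.tendsto_atTop_mono hlb (hg.comp tendsto_norm_cocompact_atTop)
  obtain ⟨xbar, hxbar⟩ := hcont.exists_forall_le htend
  refine ⟨xbar, hxbar, fun y hy => ?_⟩
  exact hstrict.eq_of_isMinOn (isMinOn_univ_iff.mpr hy) (isMinOn_univ_iff.mpr hxbar)
    (Set.mem_univ _) (Set.mem_univ _)
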